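/- Let g,n with 2g-2+n > 0, fix L ∈ ℝ₊ⁿ, and let ℓ_G : MF_Σ → ℝ≥0 be the combinatorial length function of a point G of the combinatorial Teichmüller space, which is homogeneous of degree 1 and additive under adding boundary-parallel cylinders: ℓ_G(Φ(F,x)) = ℓ_G(F) + Σᵢ xᵢLᵢ. Then the Thurston volume B^•(G) = μ•({F' ∈ MF•_Σ : ℓ_G(F') ≤ 1}) under the measure-preserving homeomorphism Φ : MF_Σ × ℝ≥0ⁿ → MF•_Σ equals [(6g-6+2n)!/(6g-6+3n)!] · B(G)/∏ᵢ₌₁ⁿ Lᵢ, where B(G) = μTh({F : ℓ_G(F) ≤ 1}). -/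

import Mathlib

open MeasureTheory Set

section Aux

lemma ofReal_max_zero (a : ℝ) : ENNReal.ofReal (max a 0) = ENNReal.ofReal a := by
  rcases le_total a 0 with h | h
  · rw [max_eq_right h, ENNReal.ofReal_zero, eq_comm, ENNReal.ofReal_eq_zero]; exact h
  · rw [max_eq_left h]

lemma measSet_forall_nonneg {Y : Type*} [MeasurableSpace Y] (m : ℕ) :
    MeasurableSet {p : Y × (Fin m → ℝ) | ∀ i, 0 ≤ p.2 i} := by
  rw [Set.setOf_forall]
  exact MeasurableSet.iInter fun i =>
    measurableSet_le measurable_const (by fun_prop)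

lemma measSet_main {Y : Type*} [MeasurableSpace Y] {f : Y → ℝ} (hf : Measurable f)
    {m : ℕ} (c : Fin m → ℝ) (r : ℝ) :
    MeasurableSet {p : Y × (Fin m → ℝ) | (∀ i, 0 ≤ p.2 i) ∧ f p.1 + ∑ i, p.2 i * c i ≤ r} := by
  have h2 : MeasurableSet {p : Y × (Fin m → ℝ) | f p.1 + ∑ i, p.2 i * c i ≤ r} :=
    measurableSet_le (by fun_prop) measurable_const
  exact (measSet_forall_nonneg m).inter h2

/-- The key slice computation. -/
lemma slice_measure (d : ℕ) {X : Type*} [MeasurableSpace X] (μ : Measure X)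
    (ℓ : X → ℝ) (hmeas : Measurable ℓ) (hpos : ∀ x, 0 ≤ ℓ x)
    {L0 : ℝ} (hL0 : 0 < L0)
    (hhom : ∀ t : ℝ, 0 ≤ t →
      μ {F | ℓ F ≤ t} = ENNReal.ofReal (t ^ d) * μ {F | ℓ F ≤ 1})
    (t : ℝ) (ht : 0 ≤ t) :
    (μ.prod volume) {p : X × ℝ | 0 ≤ p.2 ∧ ℓ p.1 + p.2 * L0 ≤ t}
      = ENNReal.ofReal (t ^ (d + 1) / (((d : ℝ) + 1) * L0)) * μ {F | ℓ F ≤ 1} := by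
  set B := μ {F | ℓ F ≤ 1} with hBdef
  have hset : MeasurableSet {p : X × ℝ | 0 ≤ p.2 ∧ ℓ p.1 + p.2 * L0 ≤ t} := by
    have h1 : MeasurableSet {p : X × ℝ | 0 ≤ p.2} :=
      measurableSet_le measurable_const measurable_snd
    have h2 : MeasurableSet {p : X × ℝ | ℓ p.1 + p.2 * L0 ≤ t} :=
      measurableSet_le ((hmeas.comp measurable_fst).add (measurable_snd.mul_const _))
        measurable_const
    exact h1.inter h2
  rw [Measure.prod_apply hset]
  have hslice : ∀ F : X, (volume (Prod.mk F ⁻¹' {p : X × ℝ | 0 ≤ p.2 ∧ ℓ p.1 + p.2 * L0 ≤ t}))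
      = ENNReal.ofReal (L0⁻¹ * (t - ℓ F)) := by
    intro F
    have : Prod.mk F ⁻¹' {p : X × ℝ | 0 ≤ p.2 ∧ ℓ p.1 + p.2 * L0 ≤ t}
        = Icc 0 ((t - ℓ F) / L0) := by
      ext x
      simp only [mem_preimage, mem_setOf_eq, mem_Icc]
      constructor
      · rintro ⟨hx, hx2⟩
        exact ⟨hx, (le_div_iff₀ hL0).mpr (by linarith)⟩
      · rintro ⟨hx, hx2⟩
        have := (le_div_iff₀ hL0).mp hx2
        exact ⟨hx, by linarith⟩
    rw [this, Real.volume_Icc]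
    congr 1
    rw [sub_zero, div_eq_inv_mul]
  simp only [hslice]
  have hint : ∀ F : X, ENNReal.ofReal (L0⁻¹ * (t - ℓ F))
      = ENNReal.ofReal L0⁻¹ * ENNReal.ofReal (max (t - ℓ F) 0) := by
    intro F
    rw [ofReal_max_zero, ← ENNReal.ofReal_mul (by positivity)]
  simp only [hint]
  rw [lintegral_const_mul _ (by
    exact ENNReal.measurable_ofReal.comp ((measurable_const.sub hmeas).max measurable_const))]
  have layer : ∫⁻ F, ENNReal.ofReal (max (t - ℓ F) 0) ∂μ
      = ∫⁻ s in Ioi (0:ℝ), μ {a | s ≤ max (t - ℓ a) 0} := by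
    exact lintegral_eq_lintegral_meas_le μ
      (Filter.Eventually.of_forall fun a => le_max_right _ _)
      (((measurable_const.sub hmeas).max measurable_const).aemeasurable)
  rw [layer]
  have hcongr : ∫⁻ s in Ioi (0:ℝ), μ {a | s ≤ max (t - ℓ a) 0}
      = ∫⁻ s in Ioi (0:ℝ), μ {a | ℓ a ≤ t - s} := by
    refine setLIntegral_congr_fun measurableSet_Ioi
      (fun s hs => ?_)
    congr 1
    ext a
    simp only [mem_setOf_eq, le_max_iff]
    constructor
    · rintro (h | h)
      · linarith
      · exact absurd h (not_le.mpr hs)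
    · intro h; left; linarith
  rw [hcongr]
  have hsplit : Ioi (0:ℝ) = Ioc 0 t ∪ Ioi t := (Ioc_union_Ioi_eq_Ioi ht).symm
  rw [hsplit, lintegral_union measurableSet_Ioi (Ioc_disjoint_Ioi le_rfl)]
  have hzero : ∫⁻ s in Ioi t, μ {a | ℓ a ≤ t - s} = 0 := by
    rw [setLIntegral_congr_fun measurableSet_Ioi
      (fun s hs => ?_), lintegral_zero]
    have : {a | ℓ a ≤ t - s} = ∅ := by
      ext a; simp only [mem_setOf_eq, mem_empty_iff_false, iff_false, not_le]
      have h1 : (0:ℝ) < s - t := by simpa [sub_pos] using hs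
      linarith [hpos a]
    rw [this, measure_empty]
  rw [hzero, add_zero]
  have hmain : ∫⁻ s in Ioc (0:ℝ) t, μ {a | ℓ a ≤ t - s}
      = ∫⁻ s in Ioc (0:ℝ) t, ENNReal.ofReal ((t - s) ^ d) * B := by
    refine setLIntegral_congr_fun measurableSet_Ioc
      (fun s hs => ?_)
    exact hhom (t - s) (by linarith [hs.2])
  rw [hmain, lintegral_mul_const _ (by
    exact ENNReal.measurable_ofReal.comp ((measurable_const.sub measurable_id).pow_const d))]
  have hcalc : ∫⁻ s in Ioc (0:ℝ) t, ENNReal.ofReal ((t - s) ^ d)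
      = ENNReal.ofReal (t ^ (d + 1) / ((d : ℝ) + 1)) := by
    rw [← ofReal_integral_eq_lintegral_ofReal]
    · congr 1
      have h1 : ∫ s in Ioc (0:ℝ) t, (t - s) ^ d = ∫ s in (0:ℝ)..t, (t - s) ^ d := by
        rw [intervalIntegral.integral_of_le ht]
      rw [h1]
      have h2 := intervalIntegral.integral_comp_sub_left (a := (0:ℝ)) (b := t)
        (fun x => x ^ d) t
      rw [h2]
      simp only [sub_self, sub_zero]
      rw [integral_pow]
      norm_num
    · exact (((continuous_const.sub continuous_id).pow d).integrableOn_Ioc)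
    · refine (ae_restrict_iff' measurableSet_Ioc).mpr
        (Filter.Eventually.of_forall fun s hs => ?_)
      exact pow_nonneg (by linarith [hs.2]) d
  rw [hcalc, ← mul_assoc, ← ENNReal.ofReal_mul (by positivity)]
  have heq : L0⁻¹ * (t ^ (d + 1) / ((d : ℝ) + 1)) = t ^ (d + 1) / (((d : ℝ) + 1) * L0) := by
    rw [inv_mul_eq_div, div_div]
  rw [heq]

universe u

lemma aux_vol : ∀ (n d : ℕ) (X : Type u) [MeasurableSpace X] (μ : Measure X)
    (ℓ : X → ℝ), Measurable ℓ → (∀ x, 0 ≤ ℓ x) → ∀ (L : Fin n → ℝ), (∀ i, 0 < L i) →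
    μ {F | ℓ F ≤ 1} ≠ ⊤ →
    (∀ t : ℝ, 0 ≤ t → μ {F | ℓ F ≤ t} = ENNReal.ofReal (t ^ d) * μ {F | ℓ F ≤ 1}) →
    (μ.prod (Measure.pi fun _ : Fin n => volume))
        {p : X × (Fin n → ℝ) | (∀ i, 0 ≤ p.2 i) ∧ ℓ p.1 + ∑ i, p.2 i * L i ≤ 1}
      = ENNReal.ofReal ((d.factorial : ℝ) / ((d + n).factorial : ℝ) / ∏ i, L i)
        * μ {F | ℓ F ≤ 1} := by
  intro n
  induction n with
  | zero =>
    intro d X _ μ ℓ hmeas hpos L hL hB hhom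
    have hs : {p : X × (Fin 0 → ℝ) | (∀ i, 0 ≤ p.2 i) ∧ ℓ p.1 + ∑ i, p.2 i * L i ≤ 1}
        = {F | ℓ F ≤ 1} ×ˢ (univ : Set (Fin 0 → ℝ)) := by
      ext ⟨a, b⟩
      simp [Finset.sum_empty]
    rw [hs, Measure.prod_prod, Measure.pi_univ]
    simp only [Finset.univ_eq_empty, Finset.prod_empty, mul_one, Nat.add_zero, div_one]
    have hd : ((d.factorial : ℝ)) ≠ 0 := Nat.cast_ne_zero.mpr (Nat.factorial_ne_zero d)
    rw [div_self hd, ENNReal.ofReal_one, one_mul]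
  | succ n ih =>
    intro d X _ μ ℓ hmeas hpos L hL hB hhom
    set B := μ {F | ℓ F ≤ 1} with hBdef
    set L0 := L 0 with hL0def
    have hL0 : 0 < L0 := hL 0
    set A : Set (X × ℝ) := {p : X × ℝ | 0 ≤ p.2} with hAdef
    have hA : MeasurableSet A := measurableSet_le measurable_const measurable_snd
    set μ' : Measure (X × ℝ) := (μ.prod volume).restrict A with hμ'def
    set ℓ' : X × ℝ → ℝ := fun p => ℓ p.1 + max p.2 0 * L0 with hℓ'def
    have hmeas' : Measurable ℓ' :=
      (hmeas.comp measurable_fst).add ((measurable_snd.max measurable_const).mul_const _)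
    have hpos' : ∀ p, 0 ≤ ℓ' p := fun p =>
      add_nonneg (hpos _) (mul_nonneg (le_max_right _ _) hL0.le)
    have key : ∀ t : ℝ, 0 ≤ t → μ' {p | ℓ' p ≤ t}
        = ENNReal.ofReal (t ^ (d + 1) / (((d : ℝ) + 1) * L0)) * B := by
      intro t ht
      have hseteq : {p : X × ℝ | ℓ' p ≤ t} ∩ A
          = {p : X × ℝ | 0 ≤ p.2 ∧ ℓ p.1 + p.2 * L0 ≤ t} := by
        ext p
        simp only [hℓ'def, hAdef, mem_inter_iff, mem_setOf_eq]
        constructor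
        · rintro ⟨h1, h2⟩
          exact ⟨h2, by rwa [max_eq_left h2] at h1⟩
        · rintro ⟨h2, h1⟩
          exact ⟨by rwa [max_eq_left h2], h2⟩
      rw [hμ'def, Measure.restrict_apply' hA, hseteq]
      exact slice_measure d μ ℓ hmeas hpos hL0 hhom t ht
    have hB' : μ' {p | ℓ' p ≤ 1} = ENNReal.ofReal (1 / (((d : ℝ) + 1) * L0)) * B := by
      simpa using key 1 zero_le_one
    have hhom' : ∀ t : ℝ, 0 ≤ t → μ' {p | ℓ' p ≤ t}
        = ENNReal.ofReal (t ^ (d + 1)) * μ' {p | ℓ' p ≤ 1} := by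
      intro t ht
      rw [key t ht, hB', ← mul_assoc, ← ENNReal.ofReal_mul (pow_nonneg ht _)]
      congr 2
      ring
    have hB'fin : μ' {p | ℓ' p ≤ 1} ≠ ⊤ := by
      rw [hB']
      exact ENNReal.mul_ne_top ENNReal.ofReal_ne_top hB
    have IH := ih (d + 1) (X × ℝ) μ' ℓ' hmeas' hpos'
      (fun i => L i.succ) (fun i => hL i.succ) hB'fin hhom'
    set ν : Measure (Fin n → ℝ) := Measure.pi fun _ : Fin n => volume with hνdef
    set S : Set (X × (Fin (n+1) → ℝ)) :=
      {p | (∀ i, 0 ≤ p.2 i) ∧ ℓ p.1 + ∑ i, p.2 i * L i ≤ 1} with hSdef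
    set S' : Set ((X × ℝ) × (Fin n → ℝ)) :=
      {p | (∀ i, 0 ≤ p.2 i) ∧ ℓ' p.1 + ∑ i, p.2 i * L i.succ ≤ 1} with hS'def
    have hS : MeasurableSet S := measSet_main hmeas L 1
    have hS' : MeasurableSet S' := measSet_main hmeas' (fun i => L i.succ) 1
    -- the per-F slice sets
    set U : X → Set (ℝ × (Fin n → ℝ)) := fun F =>
      {z | 0 ≤ z.1 ∧ ((∀ i, 0 ≤ z.2 i) ∧ ℓ F + z.1 * L0 + ∑ i, z.2 i * L i.succ ≤ 1)}
      with hUdef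
    have hU : ∀ F, MeasurableSet (U F) := by
      intro F
      have h0 : MeasurableSet {z : ℝ × (Fin n → ℝ) | 0 ≤ z.1} :=
        measurableSet_le measurable_const measurable_fst
      have h2 : MeasurableSet
          {z : ℝ × (Fin n → ℝ) | ℓ F + z.1 * L0 + ∑ i, z.2 i * L i.succ ≤ 1} :=
        measurableSet_le (by fun_prop) measurable_const
      exact h0.inter ((measSet_forall_nonneg n).inter h2)
    have htransport : (μ.prod (Measure.pi fun _ : Fin (n+1) => volume)) S
        = (μ'.prod ν) S' := by
      rw [Measure.prod_apply hS, Measure.prod_apply hS', hμ'def]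
      rw [show ∫⁻ p, ν (Prod.mk p ⁻¹' S') ∂((μ.prod volume).restrict A)
          = ∫⁻ p, A.indicator (fun p => ν (Prod.mk p ⁻¹' S')) p ∂(μ.prod volume) from
        (lintegral_indicator hA _).symm]
      rw [MeasureTheory.lintegral_prod _
        (((measurable_measure_prodMk_left hS').indicator hA).aemeasurable)]
      refine lintegral_congr fun F => ?_
      have hMP := measurePreserving_piFinSuccAbove (fun _ : Fin (n+1) => (volume : Measure ℝ)) 0
      -- LHS per F
      have hleft : (Measure.pi fun _ : Fin (n+1) => (volume : Measure ℝ)) (Prod.mk F ⁻¹' S)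
          = (volume.prod ν) (U F) := by
        rw [← hMP.measure_preimage (hU F).nullMeasurableSet]
        congr 1
        ext x
        simp only [mem_preimage, MeasurableEquiv.piFinSuccAbove, MeasurableEquiv.coe_mk,
          Fin.insertNthEquiv, Equiv.coe_fn_symm_mk, Fin.succAbove_zero, hUdef, mem_setOf_eq,
          hSdef]
        rw [Fin.forall_fin_succ, Fin.sum_univ_succ]
        constructor
        · rintro ⟨⟨h0, hrest⟩, hsum⟩
          refine ⟨h0, ?_, ?_⟩
          · intro i; rw [Fin.removeNth_zero]; exact hrest i
          · rw [Fin.removeNth_zero]; simp only [Fin.tail]; linarith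
        · rintro ⟨h0, hrest, hsum⟩
          rw [Fin.removeNth_zero] at hrest hsum
          simp only [Fin.tail] at hsum
          exact ⟨⟨h0, hrest⟩, by linarith⟩
      -- RHS per F
      have hright : ∫⁻ a, A.indicator (fun p => ν (Prod.mk p ⁻¹' S')) (F, a) ∂volume
          = (volume.prod ν) (U F) := by
        rw [Measure.prod_apply (hU F)]
        refine lintegral_congr fun a => ?_
        rcases le_or_gt 0 a with h | h
        · rw [Set.indicator_of_mem (by exact h : (F, a) ∈ A)]
          congr 1
          ext y
          simp only [mem_preimage, hS'def, hUdef, mem_setOf_eq, hℓ'def, max_eq_left h]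
          constructor
          · rintro ⟨h1, h2⟩; exact ⟨h, h1, h2⟩
          · rintro ⟨_, h1, h2⟩; exact ⟨h1, h2⟩
        · rw [Set.indicator_of_notMem (by exact not_le.mpr h : (F, a) ∉ A)]
          have : Prod.mk a ⁻¹' (U F) = ∅ := by
            ext y
            simp only [mem_preimage, hUdef, mem_setOf_eq, mem_empty_iff_false, iff_false]
            rintro ⟨h1, _⟩
            exact absurd h1 (not_le.mpr h)
          rw [this, measure_empty]
      rw [hleft, hright]
    have IH' : (μ'.prod ν) S'
        = ENNReal.ofReal (((d+1).factorial : ℝ) / ((d+1+n).factorial : ℝ)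
            / ∏ i : Fin n, L i.succ) * μ' {p | ℓ' p ≤ 1} := IH
    have h1 : (0:ℝ) < ∏ i : Fin n, L i.succ := Finset.prod_pos fun i _ => hL i.succ
    rw [htransport, IH', hB', ← mul_assoc, ← ENNReal.ofReal_mul
      (div_nonneg (div_nonneg (Nat.cast_nonneg _) (Nat.cast_nonneg _)) h1.le)]
    have h2 : ((d + (n+1)).factorial : ℝ) ≠ 0 := Nat.cast_ne_zero.mpr (Nat.factorial_ne_zero _)
    have h3 : L0 ≠ 0 := hL0.ne'
    have h4 : ((d:ℝ) + 1) ≠ 0 := by positivity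
    have harith : (((d+1).factorial : ℝ) / ((d+1+n).factorial : ℝ) / ∏ i : Fin n, L i.succ)
          * (1 / (((d : ℝ) + 1) * L0))
        = ((d.factorial : ℝ) / ((d + (n+1)).factorial : ℝ) / ∏ i : Fin (n+1), L i) := by
      have hfact : ((d + 1 + n).factorial : ℝ) = ((d + (n + 1)).factorial : ℝ) := by
        rw [show d + 1 + n = d + (n + 1) from by omega]
      have hprod : ∏ i : Fin (n + 1), L i = L 0 * ∏ i : Fin n, L i.succ :=
        Fin.prod_univ_succ L
      rw [hfact, hprod, ← hL0def, Nat.factorial_succ]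
      push_cast
      field_simp
    rw [harith]

end Aux

theorem stmt_18 (g n : ℕ) (hgn : 2 < 2 * g + n)
    (X : Type*) [MeasurableSpace X] (μ : Measure X)
    (ℓ : X → ℝ) (hmeas : Measurable ℓ) (hpos : ∀ x, 0 ≤ ℓ x)
    (L : Fin n → ℝ) (hL : ∀ i, 0 < L i)
    (hhom : ∀ t : ℝ, 0 ≤ t →
      μ {F | ℓ F ≤ t} = ENNReal.ofReal (t ^ (6 * g + 2 * n - 6)) * μ {F | ℓ F ≤ 1}) :
    (μ.prod (Measure.pi fun _ : Fin n => volume))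
        {p : X × (Fin n → ℝ) | (∀ i, 0 ≤ p.2 i) ∧ ℓ p.1 + ∑ i, p.2 i * L i ≤ 1}
      = ENNReal.ofReal
          (((6 * g + 2 * n - 6).factorial : ℝ) / ((6 * g + 2 * n - 6 + n).factorial : ℝ)
            / ∏ i, L i)
        * μ {F | ℓ F ≤ 1} := by
  set d := 6 * g + 2 * n - 6 with hd
  by_cases hB : μ {F | ℓ F ≤ 1} = ⊤
  · -- both sides are infinite
    have hRHS : ENNReal.ofReal ((d.factorial : ℝ) / ((d + n).factorial : ℝ) / ∏ i, L i)
        * μ {F | ℓ F ≤ 1} = ⊤ := by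
      rw [hB, ENNReal.mul_top]
      refine (ENNReal.ofReal_pos.mpr ?_).ne'
      have h1 : (0:ℝ) < ∏ i, L i := Finset.prod_pos fun i _ => hL i
      have h2 : (0:ℝ) < (d.factorial : ℝ) := Nat.cast_pos.mpr (Nat.factorial_pos _)
      have h3 : (0:ℝ) < ((d + n).factorial : ℝ) := Nat.cast_pos.mpr (Nat.factorial_pos _)
      positivity
    rw [hRHS]
    set ε : Fin n → ℝ := fun i => 1 / (2 * (n + 1) * L i) with hε
    have hεpos : ∀ i, 0 < ε i := fun i => by
      have := hL i
      rw [hε]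
      positivity
    have hsub : {F | ℓ F ≤ 1/2} ×ˢ (univ.pi fun i => Icc 0 (ε i)) ⊆
        {p : X × (Fin n → ℝ) | (∀ i, 0 ≤ p.2 i) ∧ ℓ p.1 + ∑ i, p.2 i * L i ≤ 1} := by
      rintro ⟨F, x⟩ ⟨hF, hx⟩
      simp only [mem_setOf_eq] at hF ⊢
      have hxi : ∀ i, x i ∈ Icc 0 (ε i) := fun i => hx i (mem_univ i)
      refine ⟨fun i => (hxi i).1, ?_⟩
      have hsum : ∑ i, x i * L i ≤ ∑ i : Fin n, 1 / (2 * ((n:ℝ) + 1)) := by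
        refine Finset.sum_le_sum fun i _ => ?_
        have h1 : x i * L i ≤ ε i * L i :=
          mul_le_mul_of_nonneg_right (hxi i).2 (hL i).le
        have h2 : ε i * L i = 1 / (2 * ((n:ℝ) + 1)) := by
          rw [hε]
          have := (hL i).ne'
          field_simp
        linarith
      have hle : ∑ i : Fin n, 1 / (2 * ((n:ℝ) + 1)) ≤ 1/2 := by
        rw [Finset.sum_const, Finset.card_univ, Fintype.card_fin, nsmul_eq_mul]
        rw [mul_one_div, div_le_div_iff₀ (by positivity) (by norm_num : (0:ℝ) < 2)]
        have hn0 : (0:ℝ) ≤ n := Nat.cast_nonneg n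
        linarith
      linarith
    have hμhalf : μ {F | ℓ F ≤ 1/2} = ⊤ := by
      rw [hhom (1/2) (by norm_num), hB, ENNReal.mul_top]
      exact (ENNReal.ofReal_pos.mpr (by positivity)).ne'
    have hbox : (Measure.pi fun _ : Fin n => (volume : Measure ℝ))
        (univ.pi fun i => Icc 0 (ε i)) ≠ 0 := by
      rw [Measure.pi_pi]
      refine Finset.prod_ne_zero_iff.mpr fun i _ => ?_
      rw [Real.volume_Icc]
      simp only [sub_zero]
      exact (ENNReal.ofReal_pos.mpr (hεpos i)).ne'
    refine top_le_iff.mp ?_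
    calc (⊤ : ENNReal) = μ {F | ℓ F ≤ 1/2} *
          (Measure.pi fun _ : Fin n => (volume : Measure ℝ)) (univ.pi fun i => Icc 0 (ε i)) := by
            rw [hμhalf, ENNReal.top_mul hbox]
      _ = (μ.prod (Measure.pi fun _ : Fin n => volume))
            ({F | ℓ F ≤ 1/2} ×ˢ (univ.pi fun i => Icc 0 (ε i))) :=
            (Measure.prod_prod _ _).symm
      _ ≤ _ := measure_mono hsub
  · exact aux_vol n d X μ ℓ hmeas hpos L hL hB hhom
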